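/- arXiv:1101.1519 — 2 statements merged into one kernel-verified Lean document; each statement's English description precedes it below -/
import Mathlib

section
/- Let D ≥ 2 and n ≥ 1 be integers. Let S be a subgroup of the n-qudit Pauli group P_n (so S is a finite group of D^n × D^n unitary matrices, each of which is a Pauli product), and let C = {ψ ∈ ℂ^{D^n} : sψ = ψ for all s ∈ S} be the common fixed subspace of S, with K = dim C. If K ≥ 1, then K · |S| = D^n. -/
open Matrix

/-- ω = exp(2πi/D), a primitive D-th root of unity. -/
noncomputable def omegaD (D : ℕ) : ℂ := Complex.exp (2 * Real.pi * Complex.I / D)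

/-- The single-qudit Pauli operator Z = Σ_j ω^j |j⟩⟨j| on ℂ^D. -/
noncomputable def Zmat (D : ℕ) : Matrix (ZMod D) (ZMod D) ℂ :=
  Matrix.of fun j k => if k = j then omegaD D ^ j.val else 0

/-- The single-qudit Pauli operator X = Σ_j |j⟩⟨j+1| on ℂ^D (index arithmetic mod D). -/
noncomputable def Xmat (D : ℕ) : Matrix (ZMod D) (ZMod D) ℂ :=
  Matrix.of fun j k => if k = j + 1 then (1 : ℂ) else 0

lemma Zmat_pow_apply (D : ℕ) [NeZero D] (b : ℕ) (j k : ZMod D) :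
    (Zmat D ^ b) j k = if k = j then omegaD D ^ (j.val * b) else 0 := by
  induction b generalizing k with
  | zero => simp [Matrix.one_apply, eq_comm]
  | succ b ih =>
    rw [pow_succ, Matrix.mul_apply]
    rw [Finset.sum_eq_single j]
    · rw [ih j, if_pos rfl]
      by_cases h : k = j
      · rw [if_pos h]
        show omegaD D ^ (j.val * b) * Zmat D j k = _
        rw [h]
        show _ * (if j = j then omegaD D ^ j.val else 0) = _
        rw [if_pos rfl, ← pow_add, mul_add, mul_one]
      · rw [if_neg h]
        show _ * Zmat D j k = 0
        have : Zmat D j k = 0 := by simp [Zmat, h]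
        rw [this, mul_zero]
    · intro m _ hm
      rw [ih m, if_neg hm, zero_mul]
    · simp

lemma Xmat_pow_apply (D : ℕ) [NeZero D] (a : ℕ) (j k : ZMod D) :
    (Xmat D ^ a) j k = if k = j + (a : ZMod D) then 1 else 0 := by
  induction a generalizing k with
  | zero => simp [Matrix.one_apply, eq_comm]
  | succ a ih =>
    rw [pow_succ, Matrix.mul_apply]
    rw [Finset.sum_eq_single (j + (a : ZMod D))]
    · rw [ih _, if_pos rfl, one_mul]
      show (if k = j + (a:ZMod D) + 1 then (1:ℂ) else 0) = _
      have : j + ((a:ZMod D)) + 1 = j + ((a+1 : ℕ) : ZMod D) := by push_cast; ring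
      rw [this]
    · intro m _ hm
      rw [ih m, if_neg hm, zero_mul]
    · simp

lemma sum_omega_pow (D : ℕ) [NeZero D] (b : ℕ) (hb0 : b ≠ 0) (hb : b < D) :
    ∑ j : ZMod D, omegaD D ^ (j.val * b) = 0 := by
  have hprim : IsPrimitiveRoot (omegaD D) D := Complex.isPrimitiveRoot_exp D (NeZero.ne D)
  have hζ1 : omegaD D ^ b ≠ 1 := hprim.pow_ne_one_of_pos_of_lt hb0 hb
  have key : ∑ j : ZMod D, omegaD D ^ (j.val * b) = ∑ k ∈ Finset.range D, (omegaD D ^ b) ^ k := by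
    rw [Finset.sum_nbij' (i := fun j : ZMod D => j.val) (j := fun k : ℕ => (k : ZMod D))]
    · intro j _; exact Finset.mem_range.mpr (ZMod.val_lt j)
    · intro k _; exact Finset.mem_univ _
    · intro j _; simp [ZMod.natCast_val, ZMod.cast_id]
    · intro k hk; exact ZMod.val_cast_of_lt (Finset.mem_range.mp hk)
    · intro j _; rw [← pow_mul, mul_comm]
  rw [key, geom_sum_eq hζ1]
  rw [← pow_mul, mul_comm b D, pow_mul, hprim.pow_eq_one, one_pow]
  simp

lemma trace_single (D : ℕ) [NeZero D] (a b : ZMod D) :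
    ∑ j : ZMod D, (Xmat D ^ a.val * Zmat D ^ b.val) j j
      = if a = 0 ∧ b = 0 then (D : ℂ) else 0 := by
  have hcast : ((a.val : ZMod D)) = a := by simp [ZMod.natCast_val, ZMod.cast_id]
  have hentry : ∀ j : ZMod D, (Xmat D ^ a.val * Zmat D ^ b.val) j j
      = if a = 0 then omegaD D ^ (j.val * b.val) else 0 := by
    intro j
    rw [Matrix.mul_apply, Finset.sum_eq_single (j + a)]
    · rw [Xmat_pow_apply, if_pos (by rw [hcast]), one_mul, Zmat_pow_apply]
      by_cases h : a = 0
      · simp [h]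
      · rw [if_neg h, if_neg]
        intro hc
        exact h (left_eq_add.mp hc)
    · intro m _ hm
      rw [Xmat_pow_apply, if_neg (by rwa [hcast]), zero_mul]
    · simp
  simp only [hentry]
  by_cases ha : a = 0
  · simp only [ha, if_pos rfl, true_and]
    by_cases hb : b = 0
    · simp [hb, ZMod.card]
    · rw [if_neg hb]
      exact sum_omega_pow D b.val (fun h => hb (by rwa [ZMod.val_eq_zero] at h)) (ZMod.val_lt b)
  · simp [ha]

/-- The n-fold Kronecker product X^x Z^z = (X^{x_1}Z^{z_1}) ⊗ ⋯ ⊗ (X^{x_n}Z^{z_n}),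
written entrywise on the index set (Fin n → ZMod D) ≃ (ZMod D)^n of size D^n. -/
noncomputable def XZ (D n : ℕ) [NeZero D] (x z : Fin n → ZMod D) :
    Matrix (Fin n → ZMod D) (Fin n → ZMod D) ℂ :=
  Matrix.of fun j k => ∏ i, (Xmat D ^ (x i).val * Zmat D ^ (z i).val) (j i) (k i)

lemma trace_XZ (D n : ℕ) [NeZero D] (x z : Fin n → ZMod D) :
    Matrix.trace (XZ D n x z) = if x = 0 ∧ z = 0 then ((D : ℂ)) ^ n else 0 := by
  have h1 : Matrix.trace (XZ D n x z)
      = ∑ j : (Fin n → ZMod D), ∏ i, (Xmat D ^ (x i).val * Zmat D ^ (z i).val) (j i) (j i) := rfl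
  have h2 : ∏ i : Fin n, ∑ c : ZMod D, (Xmat D ^ (x i).val * Zmat D ^ (z i).val) c c
      = ∑ j ∈ Fintype.piFinset (fun _ : Fin n => (Finset.univ : Finset (ZMod D))),
          ∏ i, (Xmat D ^ (x i).val * Zmat D ^ (z i).val) (j i) (j i) :=
    Finset.prod_univ_sum _ _
  rw [Fintype.piFinset_univ] at h2
  rw [h1, ← h2]
  simp only [trace_single]
  by_cases h : x = 0 ∧ z = 0
  · rw [if_pos h]
    have : ∀ i : Fin n, (if x i = 0 ∧ z i = 0 then (D:ℂ) else 0) = (D:ℂ) := by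
      intro i; rw [if_pos ⟨by rw [h.1]; rfl, by rw [h.2]; rfl⟩]
    simp [this]
  · rw [if_neg h]
    rcases not_and_or.mp h with h' | h'
    · obtain ⟨i, hi⟩ := Function.ne_iff.mp h'
      have hi' : x i ≠ 0 := by simpa using hi
      exact Finset.prod_eq_zero (Finset.mem_univ i) (if_neg (fun hc => hi' hc.1))
    · obtain ⟨i, hi⟩ := Function.ne_iff.mp h'
      have hi' : z i ≠ 0 := by simpa using hi
      exact Finset.prod_eq_zero (Finset.mem_univ i) (if_neg (fun hc => hi' hc.2))

lemma XZ_zero_zero (D n : ℕ) [NeZero D] : XZ D n 0 0 = 1 := by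
  ext j k
  show (∏ i, (Xmat D ^ (0:ZMod D).val * Zmat D ^ (0:ZMod D).val) (j i) (k i)) = (1 : Matrix _ _ ℂ) j k
  have : (0:ZMod D).val = 0 := ZMod.val_zero
  simp only [this, pow_zero, one_mul, Matrix.one_apply]
  by_cases hjk : j = k
  · subst hjk; simp
  · rw [if_neg hjk]
    obtain ⟨i, hi⟩ := Function.ne_iff.mp hjk
    exact Finset.prod_eq_zero (Finset.mem_univ i) (if_neg hi)

/-- A Pauli product ω^λ X^x Z^z on n qudits. -/
def IsPauli (D n : ℕ) [NeZero D] (M : Matrix (Fin n → ZMod D) (Fin n → ZMod D) ℂ) : Prop :=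
  ∃ (lam : ZMod D) (x z : Fin n → ZMod D), M = omegaD D ^ lam.val • XZ D n x z

/-- The common fixed subspace C = {ψ : sψ = ψ for all s ∈ S} of a group S of
(invertible) matrices. -/
noncomputable def fixedSpace (D n : ℕ) [NeZero D]
    (S : Subgroup (Matrix (Fin n → ZMod D) (Fin n → ZMod D) ℂ)ˣ) :
    Submodule ℂ ((Fin n → ZMod D) → ℂ) where
  carrier := {ψ | ∀ s ∈ S, (s : Matrix (Fin n → ZMod D) (Fin n → ZMod D) ℂ) *ᵥ ψ = ψ}
  add_mem' := by
    intro a b ha hb s hs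
    rw [Matrix.mulVec_add, ha s hs, hb s hs]
  zero_mem' := by
    intro s hs
    rw [Matrix.mulVec_zero]
  smul_mem' := by
    intro c a ha s hs
    rw [Matrix.mulVec_smul, ha s hs]

/-- Size theorem: if S is a subgroup of the n-qudit Pauli group, C its common
fixed subspace and K = dim C ≥ 1, then K · |S| = D^n. -/
theorem stmt_0 (D n : ℕ) [NeZero D] (hD : 2 ≤ D) (hn : 1 ≤ n)
    (S : Subgroup (Matrix (Fin n → ZMod D) (Fin n → ZMod D) ℂ)ˣ)
    (hS : ∀ s ∈ S, IsPauli D n (s : Matrix (Fin n → ZMod D) (Fin n → ZMod D) ℂ))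
    (hK : 1 ≤ Module.finrank ℂ (fixedSpace D n S)) :
    Module.finrank ℂ (fixedSpace D n S) * Nat.card S = D ^ n := by
  classical
  -- S is finite
  have hPfin : (setOf (IsPauli D n)).Finite := by
    have hsub : setOf (IsPauli D n) ⊆ Set.range
        (fun p : ZMod D × (Fin n → ZMod D) × (Fin n → ZMod D) =>
          omegaD D ^ p.1.val • XZ D n p.2.1 p.2.2) := by
      rintro M ⟨l, x, z, h⟩
      exact ⟨(l, x, z), h.symm⟩
    exact (Set.finite_range _).subset hsub
  haveI : Finite (setOf (IsPauli D n)) := hPfin.to_subtype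
  haveI hSfin : Finite S := by
    apply Finite.of_injective (fun s : S =>
      (⟨((s : (Matrix (Fin n → ZMod D) (Fin n → ZMod D) ℂ)ˣ) : Matrix (Fin n → ZMod D) (Fin n → ZMod D) ℂ),
        hS s s.2⟩ : setOf (IsPauli D n)))
    intro s t hst
    exact Subtype.ext (Units.ext (congrArg Subtype.val hst))
  haveI : Fintype S := Fintype.ofFinite S
  set N : ℕ := Fintype.card S with hN
  have hNpos : 0 < N := Fintype.card_pos
  have hNC : (N : ℂ) ≠ 0 := Nat.cast_ne_zero.mpr hNpos.ne'
  -- a nonzero fixed vector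
  have hne : fixedSpace D n S ≠ ⊥ := by
    intro hbot
    rw [hbot, finrank_bot] at hK
    omega
  obtain ⟨ψ₀, hψ₀mem, hψ₀⟩ := Submodule.exists_mem_ne_zero_of_ne_bot hne
  have hprim : IsPrimitiveRoot (omegaD D) D := Complex.isPrimitiveRoot_exp D (NeZero.ne D)
  -- trace of non-identity elements vanishes
  have htr0 : ∀ s : S, s ≠ (1 : S) →
      Matrix.trace ((s : (Matrix (Fin n → ZMod D) (Fin n → ZMod D) ℂ)ˣ) : Matrix (Fin n → ZMod D) (Fin n → ZMod D) ℂ) = 0 := by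
    intro s hs1
    obtain ⟨l, x, z, hsxz⟩ := hS s s.2
    rw [hsxz, Matrix.trace_smul, trace_XZ]
    by_cases hxz : x = 0 ∧ z = 0
    · exfalso
      have hs' : ((s : (Matrix (Fin n → ZMod D) (Fin n → ZMod D) ℂ)ˣ) : Matrix (Fin n → ZMod D) (Fin n → ZMod D) ℂ)
          = omegaD D ^ l.val • 1 := by
        rw [hsxz, hxz.1, hxz.2, XZ_zero_zero]
      have hfix := hψ₀mem (s : (Matrix (Fin n → ZMod D) (Fin n → ZMod D) ℂ)ˣ) s.2
      rw [hs', Matrix.smul_mulVec, Matrix.one_mulVec] at hfix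
      have hω : omegaD D ^ l.val = 1 := by
        by_contra hne1
        have hz0 : (omegaD D ^ l.val - 1) • ψ₀ = 0 := by
          rw [sub_smul, one_smul, hfix, sub_self]
        rcases smul_eq_zero.mp hz0 with h | h
        · exact hne1 (sub_eq_zero.mp h)
        · exact hψ₀ h
      have hl : l.val = 0 := by
        by_contra hl0
        exact hprim.pow_ne_one_of_pos_of_lt hl0 (ZMod.val_lt l) hω
      have hid : ((s : (Matrix (Fin n → ZMod D) (Fin n → ZMod D) ℂ)ˣ) : Matrix (Fin n → ZMod D) (Fin n → ZMod D) ℂ) = 1 := by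
        rw [hs', hl, pow_zero, one_smul]
      exact hs1 (Subtype.ext (Units.ext (by simp [hid])))
    · rw [if_neg hxz, smul_zero]
  -- the sum over S
  set T : Matrix (Fin n → ZMod D) (Fin n → ZMod D) ℂ :=
    ∑ s : S, ((s : (Matrix (Fin n → ZMod D) (Fin n → ZMod D) ℂ)ˣ) : Matrix (Fin n → ZMod D) (Fin n → ZMod D) ℂ) with hT
  have htrT : Matrix.trace T = (D : ℂ) ^ n := by
    rw [hT, Matrix.trace_sum, Fintype.sum_eq_single (1 : S) htr0]
    have h1 : (((1 : S) : (Matrix (Fin n → ZMod D) (Fin n → ZMod D) ℂ)ˣ) : Matrix (Fin n → ZMod D) (Fin n → ZMod D) ℂ) = 1 := by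
      simp
    rw [h1, Matrix.trace_one]
    simp [ZMod.card]
  have hmulT : ∀ t : S,
      ((t : (Matrix (Fin n → ZMod D) (Fin n → ZMod D) ℂ)ˣ) : Matrix (Fin n → ZMod D) (Fin n → ZMod D) ℂ) * T = T := by
    intro t
    rw [hT, Finset.mul_sum]
    calc ∑ s : S, ((t : (Matrix (Fin n → ZMod D) (Fin n → ZMod D) ℂ)ˣ) : Matrix (Fin n → ZMod D) (Fin n → ZMod D) ℂ)
            * ((s : (Matrix (Fin n → ZMod D) (Fin n → ZMod D) ℂ)ˣ) : Matrix (Fin n → ZMod D) (Fin n → ZMod D) ℂ)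
        = ∑ s : S, ((((t * s : S) : (Matrix (Fin n → ZMod D) (Fin n → ZMod D) ℂ)ˣ)) : Matrix (Fin n → ZMod D) (Fin n → ZMod D) ℂ) := by
          exact Finset.sum_congr rfl (fun s _ => rfl)
      _ = ∑ s : S, ((s : (Matrix (Fin n → ZMod D) (Fin n → ZMod D) ℂ)ˣ) : Matrix (Fin n → ZMod D) (Fin n → ZMod D) ℂ) :=
          Equiv.sum_comp (Equiv.mulLeft t)
            (fun s : S => ((s : (Matrix (Fin n → ZMod D) (Fin n → ZMod D) ℂ)ˣ) : Matrix (Fin n → ZMod D) (Fin n → ZMod D) ℂ))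
  set PP : Matrix (Fin n → ZMod D) (Fin n → ZMod D) ℂ := (N : ℂ)⁻¹ • T with hPP
  have hproj : LinearMap.IsProj (fixedSpace D n S) (Matrix.mulVecLin PP) := by
    constructor
    · intro ψ u hu
      show (u : Matrix (Fin n → ZMod D) (Fin n → ZMod D) ℂ) *ᵥ (PP *ᵥ ψ) = PP *ᵥ ψ
      rw [Matrix.mulVec_mulVec]
      congr 1
      rw [hPP, Matrix.mul_smul, hmulT ⟨u, hu⟩]
    · intro ψ hψ
      show PP *ᵥ ψ = ψ
      have hTψ : T *ᵥ ψ = (N : ℂ) • ψ := by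
        have hsum : T *ᵥ ψ = ∑ s : S,
            ((s : (Matrix (Fin n → ZMod D) (Fin n → ZMod D) ℂ)ˣ) : Matrix (Fin n → ZMod D) (Fin n → ZMod D) ℂ) *ᵥ ψ := by
          ext j
          simp only [hT, Matrix.mulVec, dotProduct, Finset.sum_apply, Matrix.sum_apply,
            Finset.sum_mul]
          exact Finset.sum_comm
        rw [hsum]
        have heach : ∀ s : S,
            ((s : (Matrix (Fin n → ZMod D) (Fin n → ZMod D) ℂ)ˣ) : Matrix (Fin n → ZMod D) (Fin n → ZMod D) ℂ) *ᵥ ψ = ψ :=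
          fun s => hψ s s.2
        simp only [heach, Finset.sum_const, Finset.card_univ, ← hN]
        rw [Nat.cast_smul_eq_nsmul]
      rw [hPP, Matrix.smul_mulVec, hTψ, smul_smul, inv_mul_cancel₀ hNC, one_smul]
  have htrP : LinearMap.trace ℂ _ (Matrix.mulVecLin PP) = Matrix.trace PP := by
    rw [← Matrix.toLin'_apply' PP,
      LinearMap.trace_eq_matrix_trace ℂ (Pi.basisFun ℂ (Fin n → ZMod D)),
      LinearMap.toMatrix_eq_toMatrix', LinearMap.toMatrix'_toLin']
  have hKtr := hproj.trace
  have hKC : (Module.finrank ℂ (fixedSpace D n S) : ℂ) * N = (D : ℂ) ^ n := by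
    have h1 : (Module.finrank ℂ (fixedSpace D n S) : ℂ) = Matrix.trace PP := by
      rw [← hKtr, htrP]
    rw [h1, hPP, Matrix.trace_smul, htrT, smul_eq_mul]
    field_simp
  have hcast : ((Module.finrank ℂ (fixedSpace D n S) * N : ℕ) : ℂ) = ((D ^ n : ℕ) : ℂ) := by
    push_cast
    exact hKC
  have hfinal : Module.finrank ℂ (fixedSpace D n S) * N = D ^ n := Nat.cast_injective hcast
  rw [Nat.card_eq_fintype_card, ← hN]
  exact hfinal
end

section
/- Let D ≥ 2 and n ≥ 1 be integers and let S be a subgroup of the n-qudit Pauli group P_n having a nonzero common fixed vector. Then S can be generated by at most 2n elements. -/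
open Matrix

section Aux

variable {D : ℕ} [NeZero D]

theorem homega : IsPrimitiveRoot (omegaD D) D := Complex.isPrimitiveRoot_exp D (NeZero.ne D)

noncomputable def eph (D : ℕ) : ZMod D → ℂ := fun a => omegaD D ^ a.val

theorem eph_natCast (x : ℕ) : eph D (x : ZMod D) = omegaD D ^ x := by
  rw [eph, ZMod.val_natCast]
  conv_rhs => rw [← Nat.div_add_mod x D, pow_add, pow_mul, homega.pow_eq_one, one_pow, one_mul]

theorem eph_add (a b : ZMod D) : eph D (a + b) = eph D a * eph D b := by
  have ha : ((a.val : ℕ) : ZMod D) = a := ZMod.natCast_rightInverse a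
  have hb : ((b.val : ℕ) : ZMod D) = b := ZMod.natCast_rightInverse b
  rw [← ha, ← hb, ← Nat.cast_add, eph_natCast, eph_natCast, eph_natCast, pow_add]

theorem eph_zero : eph D 0 = 1 := by
  have : ((0 : ℕ) : ZMod D) = 0 := Nat.cast_zero
  rw [← this, eph_natCast, pow_zero]

theorem eph_ne_zero (a : ZMod D) : eph D a ≠ 0 :=
  pow_ne_zero _ (homega.ne_zero (NeZero.ne D))

theorem eph_inj {a b : ZMod D} (h : eph D a = eph D b) : a = b := by
  have := homega.pow_inj (ZMod.val_lt a) (ZMod.val_lt b) h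
  have ha : ((a.val : ℕ) : ZMod D) = a := ZMod.natCast_rightInverse a
  have hb : ((b.val : ℕ) : ZMod D) = b := ZMod.natCast_rightInverse b
  rw [← ha, ← hb, this]

theorem eph_mul_val (a b : ZMod D) : eph D (a * b) = omegaD D ^ (a.val * b.val) := by
  have ha : ((a.val : ℕ) : ZMod D) = a := ZMod.natCast_rightInverse a
  have hb : ((b.val : ℕ) : ZMod D) = b := ZMod.natCast_rightInverse b
  have h2 : a * b = ((a.val * b.val : ℕ) : ZMod D) := by rw [Nat.cast_mul, ha, hb]
  rw [h2, eph_natCast]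

theorem eph_sum {ι : Type*} (s : Finset ι) (f : ι → ZMod D) :
    eph D (∑ i ∈ s, f i) = ∏ i ∈ s, eph D (f i) := by
  classical
  induction s using Finset.induction with
  | empty => simp [eph_zero]
  | @insert a s h ih => rw [Finset.sum_insert h, Finset.prod_insert h, eph_add, ih]

theorem gen_bound (D m : ℕ) [NeZero D] (N : AddSubgroup (Fin m → ZMod D)) :
    ∃ v : Fin m → (Fin m → ZMod D), AddSubgroup.closure (Set.range v) = N := by
  classical
  set π : (Fin m → ℤ) →+ (Fin m → ZMod D) := Pi.addMonoidHom (fun i => (Int.castAddHom (ZMod D)).comp (Pi.evalAddMonoidHom _ i)) with hπ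
  have hπsurj : Function.Surjective π := by
    intro v
    refine ⟨fun i => ((v i).val : ℤ), ?_⟩
    ext i
    show ((((v i).val : ℤ)) : ZMod D) = v i
    rw [Int.cast_natCast, ZMod.natCast_val, ZMod.cast_id]
  set N' : Submodule ℤ (Fin m → ℤ) := AddSubgroup.toIntSubmodule (N.comap π) with hN'
  obtain ⟨k, b⟩ := Submodule.basisOfPid (Pi.basisFun ℤ (Fin m)) N'
  have hk : k ≤ m := by
    have h1 := b.linearIndependent.map' N'.subtype (Submodule.ker_subtype N')
    have := h1.fintype_card_le_finrank
    simpa [Module.finrank_fintype_fun_eq_card] using this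
  have hspan : AddSubgroup.closure (Set.range (fun i => (b i : Fin m → ℤ))) = N.comap π := by
    have h1 : Submodule.span ℤ (Set.range (fun i => (b i : Fin m → ℤ))) = N' := by
      have h2 : (Set.range fun i => (b i : Fin m → ℤ)) = N'.subtype '' Set.range b := by
        rw [show (fun i => (b i : Fin m → ℤ)) = ⇑N'.subtype ∘ ⇑b from rfl, Set.range_comp]
      rw [h2, ← Submodule.map_span, b.span_eq, Submodule.map_top, Submodule.range_subtype]
    have := congrArg Submodule.toAddSubgroup h1
    rwa [Submodule.span_int_eq_addSubgroupClosure] at this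
  have hmap : AddSubgroup.map π (N.comap π) = N := by
    rw [AddSubgroup.map_comap_eq, AddMonoidHom.range_eq_top.2 hπsurj]
    simp
  have himg : AddSubgroup.closure (π '' Set.range (fun i => (b i : Fin m → ℤ))) = N := by
    rw [← AddMonoidHom.map_closure, hspan, hmap]
  refine ⟨fun i => if h : (i : ℕ) < k then π (b ⟨i, h⟩) else 0, ?_⟩
  refine le_antisymm ((AddSubgroup.closure_le _).2 ?_) ?_
  · rintro w ⟨i, rfl⟩
    by_cases h : (i : ℕ) < k
    · simp only [h, dif_pos]
      have : (b ⟨i, h⟩ : Fin m → ℤ) ∈ N.comap π := (b ⟨i, h⟩).2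
      exact this
    · simp only [h, dif_neg, not_false_iff]
      exact N.zero_mem
  · rw [← himg]
    apply AddSubgroup.closure_mono
    rintro w ⟨_, ⟨j, rfl⟩, rfl⟩
    refine ⟨⟨(j : ℕ), lt_of_lt_of_le j.2 hk⟩, ?_⟩
    simp [j.2]

theorem subgroup_gen_bound (D m : ℕ) [NeZero D]
    (R : Subgroup (Multiplicative (Fin m → ZMod D))) :
    ∃ a : Fin m → Multiplicative (Fin m → ZMod D), Subgroup.closure (Set.range a) = R := by
  obtain ⟨v, hv⟩ := gen_bound D m (AddSubgroup.toSubgroup.symm R)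
  refine ⟨fun i => Multiplicative.ofAdd (v i), le_antisymm ((Subgroup.closure_le _).2 ?_) ?_⟩
  · rintro x ⟨i, rfl⟩
    have : v i ∈ AddSubgroup.toSubgroup.symm R := hv ▸ AddSubgroup.subset_closure ⟨i, rfl⟩
    exact this
  · intro x hx
    have hx' : Multiplicative.toAdd x ∈ AddSubgroup.closure (Set.range v) := by
      rw [hv]; exact hx
    refine AddSubgroup.closure_induction
      (p := fun y _ => Multiplicative.ofAdd y ∈
        Subgroup.closure (Set.range fun i => Multiplicative.ofAdd (v i))) ?_ ?_ ?_ ?_ hx'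
    · rintro y ⟨i, rfl⟩
      exact Subgroup.subset_closure ⟨i, rfl⟩
    · exact Subgroup.one_mem _
    · intro y z _ _ hy hz
      exact Subgroup.mul_mem _ hy hz
    · intro y _ hy
      exact Subgroup.inv_mem _ hy

theorem glue {G A : Type*} [Group G] [Group A] (S : Subgroup G) (φ : ↥S →* A)
    (hinj : Function.Injective φ) (m : ℕ)
    (hgen : ∀ R : Subgroup A, ∃ a : Fin m → A, Subgroup.closure (Set.range a) = R) :
    ∃ g : Fin m → G, Subgroup.closure (Set.range g) = S := by
  obtain ⟨a, ha⟩ := hgen φ.range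
  have hmem : ∀ i, a i ∈ φ.range := fun i => ha ▸ Subgroup.subset_closure ⟨i, rfl⟩
  choose s hs using hmem
  have htop : Subgroup.closure (Set.range s) = (⊤ : Subgroup ↥S) := by
    apply Subgroup.map_injective hinj
    rw [MonoidHom.map_closure, ← Set.range_comp, ← MonoidHom.range_eq_map]
    have : ⇑φ ∘ s = a := funext hs
    rw [this, ha]
  refine ⟨fun i => (s i : G), ?_⟩
  have := congrArg (Subgroup.map S.subtype) htop
  rwa [MonoidHom.map_closure, ← Set.range_comp, ← MonoidHom.range_eq_map,
    Subgroup.range_subtype] at this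

theorem Xpow_apply (m : ℕ) (j k : ZMod D) :
    (Xmat D ^ m) j k = if k = j + (m : ZMod D) then 1 else 0 := by
  induction m generalizing j k with
  | zero => simp [Matrix.one_apply, eq_comm]
  | succ m ih =>
    rw [pow_succ, Matrix.mul_apply]
    simp only [ih]
    simp only [Xmat, Matrix.of_apply, ite_mul, one_mul, zero_mul]
    rw [Finset.sum_ite_eq' Finset.univ (j + (m : ZMod D))]
    simp only [Finset.mem_univ, if_true]
    push_cast
    rw [add_assoc]

theorem Zpow_apply (l : ℕ) (j k : ZMod D) :
    (Zmat D ^ l) j k = if k = j then omegaD D ^ (j.val * l) else 0 := by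
  induction l generalizing j k with
  | zero => simp [Matrix.one_apply, eq_comm]
  | succ l ih =>
    rw [pow_succ, Matrix.mul_apply]
    simp only [ih]
    simp only [Zmat, Matrix.of_apply, ite_mul, zero_mul]
    rw [Finset.sum_ite_eq' Finset.univ j]
    simp only [Finset.mem_univ, if_true]
    by_cases h : k = j
    · subst h; simp [pow_succ, pow_mul, mul_comm]
      ring
    · simp [h]

theorem XZ1_apply (m l : ℕ) (j k : ZMod D) :
    (Xmat D ^ m * Zmat D ^ l) j k = if k = j + (m : ZMod D) then omegaD D ^ (k.val * l) else 0 := by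
  rw [Matrix.mul_apply]
  simp only [Xpow_apply, Zpow_apply, ite_mul, one_mul, zero_mul]
  rw [Finset.sum_ite_eq' Finset.univ (j + (m : ZMod D))]
  simp only [Finset.mem_univ, if_true]
  by_cases h : k = j + (m : ZMod D)
  · subst h; simp
  · simp [h, Ne.symm h]

theorem XZ_apply {n : ℕ} (x z j k : Fin n → ZMod D) :
    XZ D n x z j k = if k = j + x then eph D (∑ i, k i * z i) else 0 := by
  rw [XZ, Matrix.of_apply]
  have hterm : ∀ i, (Xmat D ^ (x i).val * Zmat D ^ (z i).val) (j i) (k i)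
      = if k i = j i + x i then eph D (k i * z i) else 0 := by
    intro i
    simp [XZ1_apply, ZMod.natCast_val, ZMod.cast_id, eph_mul_val]
  simp only [hterm]
  by_cases h : k = j + x
  · subst h
    rw [if_pos rfl, eph_sum]
    exact Finset.prod_congr rfl fun i _ => if_pos rfl
  · rw [if_neg h]
    obtain ⟨i, hi⟩ : ∃ i, k i ≠ j i + x i := by
      by_contra hc
      push_neg at hc
      exact h (funext hc)
    exact Finset.prod_eq_zero (Finset.mem_univ i) (if_neg hi)

theorem XZ_zero {n : ℕ} : XZ D n 0 0 = 1 := by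
  ext j k
  rw [XZ_apply, Matrix.one_apply]
  simp [eq_comm, eph_zero]

theorem XZ_mul {n : ℕ} (x z x' z' : Fin n → ZMod D) :
    XZ D n x z * XZ D n x' z'
      = eph D (-(∑ i, x' i * z i)) • XZ D n (x + x') (z + z') := by
  ext j k
  rw [Matrix.mul_apply, Matrix.smul_apply]
  simp only [XZ_apply, ite_mul, zero_mul]
  rw [Finset.sum_ite_eq' Finset.univ (j + x)]
  simp only [Finset.mem_univ, if_true]
  by_cases h : k = j + x + x'
  · have h1 : k = (j + x) + x' := h
    have h2 : k = j + (x + x') := by rw [h, add_assoc]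
    rw [if_pos h1, if_pos h2, smul_eq_mul, ← eph_add, ← eph_add]
    subst h
    congr 1
    calc (∑ i, ((j + x) i) * z i) + ∑ i, (j + x + x') i * z' i
        = ∑ i, (((j + x) i) * z i + (j + x + x') i * z' i) := Finset.sum_add_distrib.symm
      _ = ∑ i, (-(x' i * z i) + (j + x + x') i * (z + z') i) := by
          refine Finset.sum_congr rfl fun i _ => ?_
          simp only [Pi.add_apply]
          ring
      _ = (∑ i, -(x' i * z i)) + ∑ i, (j + x + x') i * (z + z') i := Finset.sum_add_distrib
      _ = -(∑ i, x' i * z i) + ∑ i, (j + x + x') i * (z + z') i := by rw [Finset.sum_neg_distrib]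
  · have h1 : ¬ k = (j + x) + x' := h
    have h2 : ¬ k = j + (x + x') := by rwa [← add_assoc]
    rw [if_neg h1, if_neg h2, smul_zero, mul_zero]

theorem pauli_eq {n : ℕ} {c c' : ZMod D} {x z x' z' : Fin n → ZMod D}
    (h : eph D c • XZ D n x z = eph D c' • XZ D n x' z') :
    x = x' ∧ z = z' ∧ c = c' := by
  have hent : ∀ j k, eph D c * XZ D n x z j k = eph D c' * XZ D n x' z' j k := by
    intro j k
    have := congrFun (congrFun h j) k
    simpa using this
  have hxx : x = x' := by
    have h0 := hent 0 x
    rw [XZ_apply, XZ_apply, if_pos (by rw [zero_add])] at h0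
    by_contra hne
    rw [if_neg (by rw [zero_add]; exact hne)] at h0
    exact mul_ne_zero (eph_ne_zero _) (eph_ne_zero _) (h0.trans (mul_zero _))
  subst hxx
  have key : ∀ k : Fin n → ZMod D, eph D c * eph D (∑ i, k i * z i)
      = eph D c' * eph D (∑ i, k i * z' i) := by
    intro k
    have h0 := hent (k - x) k
    rwa [XZ_apply, XZ_apply, if_pos (by abel), if_pos (by abel)] at h0
  have hcc : c = c' := by
    have h0 := key 0
    simp only [Pi.zero_apply, zero_mul, Finset.sum_const_zero, eph_zero, mul_one] at h0
    exact eph_inj h0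
  subst hcc
  refine ⟨rfl, ?_, rfl⟩
  funext i
  have h0 := key (Pi.single i 1)
  have h1 := eph_inj (mul_left_cancel₀ (eph_ne_zero c) h0)
  simpa [Pi.single_apply, ite_mul, one_mul] using h1

/-- encoding of a pair into `Fin (2*n)`. -/
def enc {D : ℕ} (n : ℕ) (x z : Fin n → ZMod D) : Fin (2 * n) → ZMod D :=
  fun i => if h : (i : ℕ) < n then x ⟨i, h⟩ else z ⟨(i : ℕ) - n, by omega⟩

theorem enc_add {n : ℕ} (x z x' z' : Fin n → ZMod D) :
    enc n (x + x') (z + z') = enc n x z + enc n x' z' := by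
  funext i
  by_cases h : (i : ℕ) < n <;> simp [enc, h]

theorem enc_zero {n : ℕ} : enc n (0 : Fin n → ZMod D) 0 = 0 := by
  funext i
  by_cases h : (i : ℕ) < n <;> simp [enc, h]

theorem enc_inj {n : ℕ} {x z x' z' : Fin n → ZMod D}
    (h : enc n x z = enc n x' z') : x = x' ∧ z = z' := by
  constructor
  · funext i
    have := congrFun h ⟨(i : ℕ), by omega⟩
    simpa [enc, i.2] using this
  · funext i
    have hn : ¬ ((n + (i : ℕ)) < n) := by omega
    have := congrFun h ⟨n + (i : ℕ), by omega⟩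
    simpa [enc, hn] using this

end Aux

/-- A stabilizer (subgroup of the n-qudit Pauli group with a nonzero common fixed
vector) can be generated by at most 2n elements. -/
theorem stmt_17 (D n : ℕ) [NeZero D] (hD : 2 ≤ D) (hn : 1 ≤ n)
    (S : Subgroup (Matrix (Fin n → ZMod D) (Fin n → ZMod D) ℂ)ˣ)
    (hS : ∀ s ∈ S, IsPauli D n (s : Matrix (Fin n → ZMod D) (Fin n → ZMod D) ℂ))
    (ψ : (Fin n → ZMod D) → ℂ) (hψ : ψ ≠ 0)
    (hfix : ∀ s ∈ S, (s : Matrix (Fin n → ZMod D) (Fin n → ZMod D) ℂ) *ᵥ ψ = ψ) :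
    ∃ g : Fin (2 * n) → (Matrix (Fin n → ZMod D) (Fin n → ZMod D) ℂ)ˣ,
      Subgroup.closure (Set.range g) = S := by
  classical
  have hdec : ∀ s : ↥S, IsPauli D n ((s : (Matrix (Fin n → ZMod D) (Fin n → ZMod D) ℂ)ˣ) :
      Matrix (Fin n → ZMod D) (Fin n → ZMod D) ℂ) := fun s => hS s s.2
  choose lam xc zc hsd using hdec
  have hs' : ∀ s : ↥S, ((s : (Matrix (Fin n → ZMod D) (Fin n → ZMod D) ℂ)ˣ) :
      Matrix (Fin n → ZMod D) (Fin n → ZMod D) ℂ) = eph D (lam s) • XZ D n (xc s) (zc s) :=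
    fun s => hsd s
  -- multiplicativity of the (x, z) data
  have hmul : ∀ s t : ↥S, xc (s * t) = xc s + xc t ∧ zc (s * t) = zc s + zc t := by
    intro s t
    have hm : eph D (lam (s * t)) • XZ D n (xc (s * t)) (zc (s * t))
        = eph D (lam s + lam t + -(∑ i, xc t i * zc s i)) • XZ D n (xc s + xc t) (zc s + zc t) := by
      rw [← hs' (s * t)]
      calc ((↑(s * t) : (Matrix (Fin n → ZMod D) (Fin n → ZMod D) ℂ)ˣ) :
              Matrix (Fin n → ZMod D) (Fin n → ZMod D) ℂ)
          = (eph D (lam s) • XZ D n (xc s) (zc s)) * (eph D (lam t) • XZ D n (xc t) (zc t)) := by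
            rw [← hs' s, ← hs' t]; rfl
        _ = (eph D (lam s) * eph D (lam t)) • (XZ D n (xc s) (zc s) * XZ D n (xc t) (zc t)) := by
            rw [Matrix.smul_mul, Matrix.mul_smul, smul_smul]
        _ = (eph D (lam s) * eph D (lam t)) •
              (eph D (-(∑ i, xc t i * zc s i)) • XZ D n (xc s + xc t) (zc s + zc t)) := by
            rw [XZ_mul]
        _ = eph D (lam s + lam t + -(∑ i, xc t i * zc s i)) •
              XZ D n (xc s + xc t) (zc s + zc t) := by
            rw [smul_smul, ← eph_add, ← eph_add]
    obtain ⟨h1, h2, _⟩ := pauli_eq hm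
    exact ⟨h1, h2⟩
  -- identity
  have hone : xc 1 = 0 ∧ zc 1 = 0 := by
    have hm : eph D (lam 1) • XZ D n (xc 1) (zc 1) = eph D 0 • XZ D n 0 0 := by
      rw [← hs' 1, eph_zero, one_smul, XZ_zero]
      simp
    obtain ⟨h1, h2, _⟩ := pauli_eq hm
    exact ⟨h1, h2⟩
  -- the phase is determined thanks to the fixed vector
  have hdet : ∀ s t : ↥S, xc s = xc t → zc s = zc t → s = t := by
    intro s t hx hz
    have hfs := hfix ↑s s.2
    have hft := hfix ↑t t.2
    rw [hs' s, hx, hz, Matrix.smul_mulVec] at hfs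
    rw [hs' t, Matrix.smul_mulVec] at hft
    have hw : XZ D n (xc t) (zc t) *ᵥ ψ ≠ 0 := by
      intro h0
      rw [h0, smul_zero] at hfs
      exact hψ hfs.symm
    have heq : eph D (lam s) = eph D (lam t) := by
      have h2 := hfs.trans hft.symm
      by_contra hne
      apply hw
      have h3 : (eph D (lam s) - eph D (lam t)) • (XZ D n (xc t) (zc t) *ᵥ ψ) = 0 := by
        rw [sub_smul, h2, sub_self]
      rcases smul_eq_zero.1 h3 with h4 | h4
      · exact absurd (sub_eq_zero.1 h4) hne
      · exact h4
    have hl : lam s = lam t := eph_inj heq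
    apply Subtype.ext
    apply Units.ext
    rw [hs' s, hs' t, hx, hz, hl]
  -- the monoid hom to (ZMod D)^{2n}
  let φ : ↥S →* Multiplicative (Fin (2 * n) → ZMod D) :=
    { toFun := fun s => Multiplicative.ofAdd (enc n (xc s) (zc s))
      map_one' := by
        show Multiplicative.ofAdd (enc n (xc 1) (zc 1)) = 1
        rw [hone.1, hone.2, enc_zero]
        rfl
      map_mul' := by
        intro s t
        show Multiplicative.ofAdd (enc n (xc (s * t)) (zc (s * t)))
          = Multiplicative.ofAdd (enc n (xc s) (zc s)) * Multiplicative.ofAdd (enc n (xc t) (zc t))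
        rw [(hmul s t).1, (hmul s t).2, enc_add]
        rfl }
  have hφinj : Function.Injective φ := by
    intro s t h
    have h' : enc n (xc s) (zc s) = enc n (xc t) (zc t) := h
    obtain ⟨hx, hz⟩ := enc_inj h'
    exact hdet s t hx hz
  exact glue S φ hφinj (2 * n) (subgroup_gen_bound D (2 * n))
end
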